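/- For every angle φ ∈ (0, π/2) there exists a constant c > 0 such that for all complex z with Re z ≥ 1/2 and |arg z| ≤ φ one has Γ(Re z)/|Γ(z)| ≤ c·exp((Re z)·φ·tan φ), where Γ(Re z) is the real Gamma function evaluated at Re z and |Γ(z)| is the modulus of the complex Gamma function at z. -/

import Mathlib

open Complex Real Filter Finset

/-- Auxiliary function: `G(t) = a·arctan(a/t) − (t/2)·log(1 + a²/t²)`,
which equals `(1/2)∫_t^∞ log(1 + a²/s²) ds`. -/
noncomputable def Gaux (a t : ℝ) : ℝ :=
  a * Real.arctan (a / t) - t / 2 * Real.log (1 + a ^ 2 / t ^ 2)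

lemma hasDerivAt_Gaux (a : ℝ) {t : ℝ} (ht : 0 < t) :
    HasDerivAt (Gaux a) (-(Real.log (1 + a ^ 2 / t ^ 2) / 2)) t := by
  have ht' : t ≠ 0 := ht.ne'
  have hu : (0 : ℝ) < 1 + a ^ 2 / t ^ 2 := by positivity
  have h1 : HasDerivAt (fun s : ℝ => a / s) (-(a / t ^ 2)) t := by
    have := (hasDerivAt_inv ht').const_mul a
    simpa [div_eq_mul_inv, mul_comm, mul_assoc, mul_left_comm] using this
  have harc : HasDerivAt (fun s : ℝ => Real.arctan (a / s))
      (1 / (1 + (a / t) ^ 2) * -(a / t ^ 2)) t :=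
    (Real.hasDerivAt_arctan (a / t)).comp t h1
  have hsq : HasDerivAt (fun s : ℝ => s ^ 2) (2 * t) t := by
    simpa using hasDerivAt_pow 2 t
  have hdiv : HasDerivAt (fun s : ℝ => a ^ 2 / s ^ 2)
      ((0 * t ^ 2 - a ^ 2 * (2 * t)) / (t ^ 2) ^ 2) t :=
    (hasDerivAt_const t (a ^ 2)).div hsq (pow_ne_zero 2 ht')
  have hin : HasDerivAt (fun s : ℝ => 1 + a ^ 2 / s ^ 2)
      ((0 * t ^ 2 - a ^ 2 * (2 * t)) / (t ^ 2) ^ 2) t :=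
    hdiv.const_add 1
  have hlog : HasDerivAt (fun s : ℝ => Real.log (1 + a ^ 2 / s ^ 2))
      (((0 * t ^ 2 - a ^ 2 * (2 * t)) / (t ^ 2) ^ 2) / (1 + a ^ 2 / t ^ 2)) t :=
    hin.log hu.ne'
  have hhalf : HasDerivAt (fun s : ℝ => s / 2) (1 / 2) t := by
    simpa using (hasDerivAt_id t).div_const 2
  have hmul := hhalf.mul hlog
  have htotal := (harc.const_mul a).sub hmul
  refine htotal.congr_deriv ?_
  have h2 : t ^ 2 ≠ 0 := pow_ne_zero 2 ht'
  field_simp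
  ring
lemma F_ineq (v : ℝ) (hv : 0 ≤ v) :
    Real.log (1 + v ^ 2) / 2 ≤ v * Real.arctan v := by
  set f : ℝ → ℝ := fun v => v * Real.arctan v - Real.log (1 + v ^ 2) / 2 with hf
  have hder : ∀ w : ℝ, HasDerivAt f (Real.arctan w) w := by
    intro w
    have hu : (0 : ℝ) < 1 + w ^ 2 := by positivity
    have h1 : HasDerivAt (fun v : ℝ => v * Real.arctan v)
        (1 * Real.arctan w + w * (1 / (1 + w ^ 2))) w :=
      (hasDerivAt_id w).mul (Real.hasDerivAt_arctan w)
    have hsq : HasDerivAt (fun v : ℝ => 1 + v ^ 2) (2 * w) w := by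
      simpa using (hasDerivAt_pow 2 w).const_add 1
    have hlog : HasDerivAt (fun v : ℝ => Real.log (1 + v ^ 2)) (2 * w / (1 + w ^ 2)) w :=
      hsq.log hu.ne'
    have := h1.sub (hlog.div_const 2)
    refine this.congr_deriv ?_
    field_simp
    ring
  have hmono : MonotoneOn f (Set.Ici 0) := by
    apply monotoneOn_of_deriv_nonneg (convex_Ici 0)
    · exact fun w _ => (hder w).continuousAt.continuousWithinAt
    · exact fun w _ => ((hder w).differentiableAt).differentiableWithinAt
    · intro w hw
      rw [(hder w).deriv]
      rw [interior_Ici] at hw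
      have : Real.arctan 0 ≤ Real.arctan w := Real.arctan_strictMono.monotone (le_of_lt hw)
      simpa [Real.arctan_zero] using this
  have h0 : f 0 = 0 := by simp [hf, Real.arctan_zero]
  have := hmono (Set.self_mem_Ici) hv hv
  rw [h0] at this
  simp only [hf] at this
  linarith

lemma Gaux_nonneg {a t : ℝ} (ha : 0 ≤ a) (ht : 0 < t) : 0 ≤ Gaux a t := by
  have hv : 0 ≤ a / t := div_nonneg ha ht.le
  have h := F_ineq (a / t) hv
  have hv2 : (a / t) ^ 2 = a ^ 2 / t ^ 2 := div_pow a t 2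
  have e1 : t * (a / t * Real.arctan (a / t)) = a * Real.arctan (a / t) := by
    field_simp
  have e2 : t * (Real.log (1 + (a / t) ^ 2) / 2) = t / 2 * Real.log (1 + a ^ 2 / t ^ 2) := by
    rw [hv2]; ring
  have := mul_le_mul_of_nonneg_left h ht.le
  rw [e1, e2] at this
  unfold Gaux
  linarith

lemma Gaux_step (a : ℝ) {s : ℝ} (hs : 0 < s) :
    Real.log (1 + a ^ 2 / (s + 1) ^ 2) / 2 ≤ Gaux a s - Gaux a (s + 1) := by
  obtain ⟨ξ, hξ, hslope⟩ := exists_hasDerivAt_eq_slope (Gaux a)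
    (fun t => -(Real.log (1 + a ^ 2 / t ^ 2) / 2)) (by linarith : s < s + 1)
    (fun t ht => (hasDerivAt_Gaux a (lt_of_lt_of_le hs ht.1)).continuousAt.continuousWithinAt)
    (fun t ht => hasDerivAt_Gaux a (hs.trans ht.1))
  have hξ0 : 0 < ξ := hs.trans hξ.1
  have hξ1 : ξ ≤ s + 1 := le_of_lt hξ.2
  have heq : Gaux a s - Gaux a (s + 1) = Real.log (1 + a ^ 2 / ξ ^ 2) / 2 := by
    have h1 : (s + 1) - s = 1 := by ring
    rw [h1, div_one] at hslope
    linarith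
  rw [heq]
  have h1 : a ^ 2 / (s + 1) ^ 2 ≤ a ^ 2 / ξ ^ 2 := by gcongr
  have h2 : Real.log (1 + a ^ 2 / (s + 1) ^ 2) ≤ Real.log (1 + a ^ 2 / ξ ^ 2) := by
    have hpos : (0 : ℝ) < 1 + a ^ 2 / (s + 1) ^ 2 := by positivity
    exact Real.log_le_log hpos (by linarith)
  linarith

lemma Gaux_sum (a x : ℝ) (hx : 0 < x) (n : ℕ) :
    ∑ j ∈ Finset.range n, Real.log (1 + a ^ 2 / (x + 1 + j) ^ 2) / 2 ≤
      Gaux a x - Gaux a (x + n) := by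
  induction n with
  | zero => simp
  | succ n ih =>
    rw [Finset.sum_range_succ]
    have hstep := Gaux_step a (s := x + n) (by positivity)
    have e1 : x + 1 + (n : ℝ) = x + (n : ℝ) + 1 := by ring
    have e2 : x + ((n : ℕ) + 1 : ℕ) = x + (n : ℝ) + 1 := by push_cast; ring
    rw [e1, e2]
    linarith

theorem gamma_ratio_angular_bound (φ : ℝ) (hφ0 : 0 < φ) (hφ : φ < Real.pi / 2) :
    ∃ c > (0 : ℝ), ∀ z : ℂ, 1 / 2 ≤ z.re → |Complex.arg z| ≤ φ →
      Real.Gamma z.re / ‖Complex.Gamma z‖ ≤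
        c * Real.exp (z.re * φ * Real.tan φ) := by
  have hπ : 0 < Real.pi := Real.pi_pos
  have hcos : 0 < Real.cos φ :=
    Real.cos_pos_of_mem_Ioo ⟨by linarith, hφ⟩
  refine ⟨1 / Real.cos φ, by positivity, ?_⟩
  intro z hre harg
  set x : ℝ := z.re with hxdef
  have hx0 : 0 < x := lt_of_lt_of_le (by norm_num) hre
  set a : ℝ := |z.im| with hadef
  have ha0 : 0 ≤ a := abs_nonneg _
  have hz : z ≠ 0 := by
    intro h
    rw [hxdef, h] at hx0
    simp at hx0
  -- bound |z.im|/x ≤ tan φ and arctan (a/x) ≤ φ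
  have htanarg : Real.tan (Complex.arg z) = z.im / x := Complex.tan_arg z
  have hφIoo : φ ∈ Set.Ioo (-(Real.pi / 2)) (Real.pi / 2) := ⟨by linarith, hφ⟩
  have hθIoo : Complex.arg z ∈ Set.Ioo (-(Real.pi / 2)) (Real.pi / 2) := by
    constructor
    · have := neg_abs_le (Complex.arg z); linarith
    · have := le_abs_self (Complex.arg z); linarith
  have hmono := Real.strictMonoOn_tan.monotoneOn
  have hup : Real.tan (Complex.arg z) ≤ Real.tan φ := by
    apply hmono hθIoo hφIoo
    have := le_abs_self (Complex.arg z); linarith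
  have hnegIoo : -(Complex.arg z) ∈ Set.Ioo (-(Real.pi / 2)) (Real.pi / 2) := by
    constructor
    · have := le_abs_self (Complex.arg z); linarith [hθIoo.2]
    · have := neg_abs_le (Complex.arg z); linarith
  have hdown : Real.tan (-(Complex.arg z)) ≤ Real.tan φ := by
    apply hmono hnegIoo hφIoo
    have := neg_abs_le (Complex.arg z); linarith
  rw [Real.tan_neg] at hdown
  have habs_tan : |Real.tan (Complex.arg z)| ≤ Real.tan φ := abs_le.mpr ⟨by linarith, hup⟩
  have hax : a / x ≤ Real.tan φ := by
    have : a / x = |z.im / x| := by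
      rw [abs_div, abs_of_pos hx0]
    rw [this, ← htanarg]
    exact habs_tan
  have htanφ0 : 0 ≤ Real.tan φ := le_trans (div_nonneg ha0 hx0.le) hax
  have ha : a ≤ x * Real.tan φ := by
    have := (div_le_iff₀ hx0).mp hax; linarith [this]
  have harctan_le : Real.arctan (a / x) ≤ φ := by
    have h1 : Real.arctan (a / x) ≤ Real.arctan (Real.tan φ) :=
      Real.arctan_strictMono.monotone hax
    rwa [Real.arctan_tan hφIoo.1 hφIoo.2] at h1
  have harctan0 : 0 ≤ Real.arctan (a / x) := by
    have := Real.arctan_strictMono.monotone (div_nonneg ha0 hx0.le)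
    simpa [Real.arctan_zero] using this
  -- bound for Gaux a x
  have hGx : Gaux a x ≤ x * φ * Real.tan φ := by
    have h1 : Gaux a x ≤ a * Real.arctan (a / x) := by
      unfold Gaux
      have hlog0 : 0 ≤ Real.log (1 + a ^ 2 / x ^ 2) :=
        Real.log_nonneg (le_add_of_nonneg_right (by positivity))
      nlinarith [hx0.le]
    have h2 : a * Real.arctan (a / x) ≤ (x * Real.tan φ) * φ :=
      mul_le_mul ha harctan_le harctan0 (mul_nonneg hx0.le htanφ0)
    nlinarith
  -- bound on the product of sqrt factors
  set B : ℝ := 1 / Real.cos φ * Real.exp (x * φ * Real.tan φ) with hBdef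
  have hB0 : 0 < B := by positivity
  have hQ : ∀ n : ℕ, ∏ j ∈ Finset.range (n + 1),
      Real.sqrt (1 + a ^ 2 / (x + j) ^ 2) ≤ B := by
    intro n
    have hprod : ∏ j ∈ Finset.range (n + 1), Real.sqrt (1 + a ^ 2 / (x + j) ^ 2) =
        Real.exp (∑ j ∈ Finset.range (n + 1), Real.log (1 + a ^ 2 / (x + j) ^ 2) / 2) := by
      rw [Real.exp_sum]
      refine Finset.prod_congr rfl fun j _ => ?_
      have h1 : (0 : ℝ) < 1 + a ^ 2 / (x + j) ^ 2 := by positivity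
      rw [← Real.log_sqrt h1.le, Real.exp_log (Real.sqrt_pos.mpr h1)]
    have hsum : ∑ j ∈ Finset.range (n + 1), Real.log (1 + a ^ 2 / (x + j) ^ 2) / 2 ≤
        Real.log (1 + a ^ 2 / x ^ 2) / 2 + Gaux a x := by
      rw [Finset.sum_range_succ']
      have e0 : x + ((0 : ℕ) : ℝ) = x := by push_cast; ring
      have hshift : ∑ j ∈ Finset.range n, Real.log (1 + a ^ 2 / (x + ((j : ℕ) + 1 : ℕ)) ^ 2) / 2 =
          ∑ j ∈ Finset.range n, Real.log (1 + a ^ 2 / (x + 1 + j) ^ 2) / 2 := by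
        refine Finset.sum_congr rfl fun j _ => ?_
        have : x + ((j : ℕ) + 1 : ℕ) = x + 1 + (j : ℝ) := by push_cast; ring
        rw [this]
      rw [e0, hshift]
      have h1 := Gaux_sum a x hx0 n
      have h2 : 0 ≤ Gaux a (x + n) := Gaux_nonneg ha0 (by positivity)
      linarith
    rw [hprod]
    have hstep2 : Real.exp (∑ j ∈ Finset.range (n + 1),
        Real.log (1 + a ^ 2 / (x + j) ^ 2) / 2) ≤
        Real.exp (Real.log (1 + a ^ 2 / x ^ 2) / 2 + Gaux a x) :=
      Real.exp_le_exp.mpr hsum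
    have hsqrt_le : Real.exp (Real.log (1 + a ^ 2 / x ^ 2) / 2) ≤ 1 / Real.cos φ := by
      have h1 : (0 : ℝ) < 1 + a ^ 2 / x ^ 2 := by positivity
      rw [← Real.log_sqrt h1.le, Real.exp_log (Real.sqrt_pos.mpr h1)]
      have h2 : a ^ 2 / x ^ 2 ≤ Real.tan φ ^ 2 := by
        have := pow_le_pow_left₀ (div_nonneg ha0 hx0.le) hax 2
        rwa [div_pow] at this
      have h3 : 1 + a ^ 2 / x ^ 2 ≤ (1 / Real.cos φ) ^ 2 := by
        have h4 : (1 + Real.tan φ ^ 2)⁻¹ = Real.cos φ ^ 2 := Real.inv_one_add_tan_sq hcos.ne'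
        have h5 : (1 : ℝ) + Real.tan φ ^ 2 = (1 / Real.cos φ) ^ 2 := by
          rw [div_pow, one_pow, eq_div_iff (by positivity), ← h4]
          field_simp
        rw [← h5]
        linarith
      calc Real.sqrt (1 + a ^ 2 / x ^ 2) ≤ Real.sqrt ((1 / Real.cos φ) ^ 2) :=
            Real.sqrt_le_sqrt h3
        _ = 1 / Real.cos φ := Real.sqrt_sq (by positivity)
    calc Real.exp (∑ j ∈ Finset.range (n + 1), Real.log (1 + a ^ 2 / (x + j) ^ 2) / 2)
        ≤ Real.exp (Real.log (1 + a ^ 2 / x ^ 2) / 2 + Gaux a x) := hstep2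
      _ = Real.exp (Real.log (1 + a ^ 2 / x ^ 2) / 2) * Real.exp (Gaux a x) := Real.exp_add _ _
      _ ≤ (1 / Real.cos φ) * Real.exp (x * φ * Real.tan φ) := by
          apply mul_le_mul hsqrt_le (Real.exp_le_exp.mpr hGx) (Real.exp_pos _).le
            (by positivity)
      _ = B := rfl
  -- relation between the absolute values of term j
  have habsj : ∀ j : ℕ, ‖z + (j : ℕ)‖ =
      (x + j) * Real.sqrt (1 + a ^ 2 / (x + j) ^ 2) := by
    intro j
    have hxj : (0 : ℝ) < x + j := by positivity
    have h1 : ‖z + (j : ℕ)‖ = Real.sqrt ((x + j) ^ 2 + z.im ^ 2) := by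
      rw [Complex.norm_def, Complex.normSq_apply]
      congr 1
      simp [pow_two]
      rfl
    have h2 : (x + j) ^ 2 + z.im ^ 2 = (x + j) ^ 2 * (1 + a ^ 2 / (x + j) ^ 2) := by
      have : a ^ 2 = z.im ^ 2 := _root_.sq_abs z.im
      field_simp
      linarith [_root_.sq_abs z.im]
    rw [h1, h2, Real.sqrt_mul (sq_nonneg _), Real.sqrt_sq hxj.le]
  -- per-n inequality between GammaSeq values
  have hkey : ∀ n : ℕ, 1 ≤ n →
      Real.GammaSeq x n ≤ B * ‖Complex.GammaSeq z n‖ := by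
    intro n hn
    have hn0 : (0 : ℝ) < n := by exact_mod_cast hn
    have habsG : ‖Complex.GammaSeq z n‖ =
        (n : ℝ) ^ x * (Nat.factorial n : ℝ) / ∏ j ∈ Finset.range (n + 1), ‖z + j‖ := by
      unfold Complex.GammaSeq
      rw [norm_div, norm_mul, norm_prod]
      congr 2
      · rw [show ((n : ℕ) : ℂ) = (((n : ℕ) : ℝ) : ℂ) by push_cast; rfl,
          Complex.norm_cpow_eq_rpow_re_of_pos hn0]
      · simp
    have hD : (0 : ℝ) < ∏ j ∈ Finset.range (n + 1), (x + j) :=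
      Finset.prod_pos fun j _ => by positivity
    have hprodeq : ∏ j ∈ Finset.range (n + 1), ‖z + j‖ =
        (∏ j ∈ Finset.range (n + 1), (x + j)) *
          ∏ j ∈ Finset.range (n + 1), Real.sqrt (1 + a ^ 2 / (x + j) ^ 2) := by
      rw [← Finset.prod_mul_distrib]
      exact Finset.prod_congr rfl fun j _ => habsj j
    have hQn := hQ n
    have hQpos : (0 : ℝ) < ∏ j ∈ Finset.range (n + 1),
        Real.sqrt (1 + a ^ 2 / (x + j) ^ 2) :=
      Finset.prod_pos fun j _ => Real.sqrt_pos.mpr (by positivity)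
    have hA : (0 : ℝ) < (n : ℝ) ^ x * (Nat.factorial n : ℝ) := by
      have := Real.rpow_pos_of_pos hn0 x
      have hfac : (0 : ℝ) < (Nat.factorial n : ℝ) := by exact_mod_cast Nat.factorial_pos n
      positivity
    rw [habsG, hprodeq, ← div_div]
    unfold Real.GammaSeq
    set R : ℝ := (n : ℝ) ^ x * (Nat.factorial n : ℝ) / ∏ j ∈ Finset.range (n + 1), (x + j)
      with hRdef
    have hR : 0 < R := by rw [hRdef]; positivity
    rw [mul_div_assoc', le_div_iff₀ hQpos]
    nlinarith [mul_nonneg (sub_nonneg.mpr hQn) hR.le]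
  -- take limits
  have hG1 : Tendsto (Real.GammaSeq x) atTop (nhds (Real.Gamma x)) :=
    Real.GammaSeq_tendsto_Gamma x
  have hG2 : Tendsto (fun n => B * ‖Complex.GammaSeq z n‖) atTop
      (nhds (B * ‖Complex.Gamma z‖)) :=
    ((continuous_norm.tendsto _).comp (Complex.GammaSeq_tendsto_Gamma z)).const_mul B
  have hineq : Real.Gamma x ≤ B * ‖Complex.Gamma z‖ := by
    refine le_of_tendsto_of_tendsto hG1 hG2 ?_
    filter_upwards [eventually_ge_atTop 1] with n hn
    exact hkey n hn
  have hΓz : 0 < ‖Complex.Gamma z‖ := by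
    rw [norm_pos_iff]
    exact Complex.Gamma_ne_zero_of_re_pos hx0
  rw [div_le_iff₀ hΓz]
  calc Real.Gamma x ≤ B * ‖Complex.Gamma z‖ := hineq
    _ = 1 / Real.cos φ * Real.exp (x * φ * Real.tan φ) * ‖Complex.Gamma z‖ := rfl
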